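/- For all integers n ≥ 0 and k ≥ 1, b_{2k+1}(n) ≡ ā(n) (mod 4), where b_m denotes the overcubic partition m-tuples function and ā = b_1 is the overcubic partition function. -/

import Mathlib

open PowerSeries

/-- Truncated version of `fₖ = ∏_{i≥1} (1 - q^{k i})`: the product over `1 ≤ i ≤ N`,
which has the same coefficients as the infinite product in degrees `≤ N`. -/
noncomputable def fTrunc (k N : ℕ) : PowerSeries ℤ :=
  ∏ i ∈ Finset.Icc 1 N, (1 - (PowerSeries.X : PowerSeries ℤ) ^ (k * i))

/-- `b m n` is the `n`-th coefficient of `f₄ᵐ / (f₁^{2m} f₂ᵐ)`, the number of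
overcubic partition `m`-tuples of `n`. -/
noncomputable def b (m n : ℕ) : ℤ :=
  PowerSeries.coeff n
    ((fTrunc 4 n) ^ m * PowerSeries.invOfUnit ((fTrunc 1 n) ^ (2 * m) * (fTrunc 2 n) ^ m) 1)

noncomputable def fT (k N : ℕ) : PowerSeries (ZMod 4) :=
  ∏ i ∈ Finset.Icc 1 N, (1 - (PowerSeries.X : PowerSeries (ZMod 4)) ^ (k * i))

lemma map_fTrunc (k N : ℕ) :
    PowerSeries.map (Int.castRingHom (ZMod 4)) (fTrunc k N) = fT k N := by
  unfold fTrunc fT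
  rw [map_prod]
  refine Finset.prod_congr rfl fun i hi => ?_
  simp

lemma constCoeff_fTrunc (k N : ℕ) (hk : 1 ≤ k) :
    PowerSeries.constantCoeff (fTrunc k N) = 1 := by
  unfold fTrunc
  rw [map_prod]
  refine Finset.prod_eq_one fun i hi => ?_
  have hi1 : 1 ≤ i := (Finset.mem_Icc.mp hi).1
  have : k * i ≠ 0 := by positivity
  simp [this]

lemma two_mul_two_zero : (2 : PowerSeries (ZMod 4)) * 2 = 0 := by
  have : ((2 : ZMod 4) * 2 : ZMod 4) = 0 := by decide
  rw [show (2 : PowerSeries (ZMod 4)) = PowerSeries.C (R := ZMod 4) 2 from (map_ofNat _ 2).symm,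
    ← map_mul, this, map_zero]

lemma sq_dvd (k N : ℕ) : (2 : PowerSeries (ZMod 4)) ∣ (fT k N) ^ 2 - fT (2 * k) N := by
  rw [← Ideal.mem_span_singleton, ← Ideal.Quotient.eq]
  unfold fT
  rw [← Finset.prod_pow, map_prod, map_prod]
  refine Finset.prod_congr rfl fun i hi => ?_
  rw [Ideal.Quotient.eq, Ideal.mem_span_singleton]
  refine ⟨((PowerSeries.X : PowerSeries (ZMod 4)) ^ (k * i)) ^ 2
    - PowerSeries.X ^ (k * i), ?_⟩
  have h : 2 * k * i = (k * i) * 2 := by ring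
  rw [h, pow_mul]
  ring

lemma cancel {S : Type*} [CommRing S] (P Q U V Y Z : S)
    (hU : U * Y = 1) (hV : V * Z = 1) (h : P * V = Q * U) : P * Y = Q * Z := by
  calc P * Y = P * Y * (V * Z) := by rw [hV, mul_one]
    _ = (P * V) * (Y * Z) := by ring
    _ = (Q * U) * (Y * Z) := by rw [h]
    _ = Q * Z * (U * Y) := by ring
    _ = Q * Z := by rw [hU, mul_one]

theorem stmt15 (n k : ℕ) (hk : 1 ≤ k) : b (2 * k + 1) n ≡ b 1 n [ZMOD 4] := by
  rw [show (4:ℤ) = ((4:ℕ):ℤ) by norm_num, ← ZMod.intCast_eq_intCast_iff]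
  unfold b
  set ρ := PowerSeries.map (Int.castRingHom (ZMod 4)) with hρ
  have hcast : ∀ φ : PowerSeries ℤ,
      ((PowerSeries.coeff n φ : ℤ) : ZMod 4) = PowerSeries.coeff n (ρ φ) := by
    intro φ; rw [hρ, PowerSeries.coeff_map]; rfl
  rw [hcast, hcast]
  congr 1
  -- constant coefficients
  have hcc : ∀ m : ℕ, PowerSeries.constantCoeff (R := ℤ)
      ((fTrunc 1 n) ^ (2 * m) * (fTrunc 2 n) ^ m) = 1 := by
    intro m
    rw [map_mul, map_pow, map_pow, constCoeff_fTrunc 1 n le_rfl,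
      constCoeff_fTrunc 2 n (by norm_num), one_pow, one_pow, one_mul]
  have hinv : ∀ m : ℕ,
      ρ ((fTrunc 1 n) ^ (2 * m) * (fTrunc 2 n) ^ m)
        * ρ (PowerSeries.invOfUnit ((fTrunc 1 n) ^ (2 * m) * (fTrunc 2 n) ^ m) 1) = 1 := by
    intro m
    rw [← map_mul, PowerSeries.mul_invOfUnit _ 1 (by rw [hcc m, Units.val_one]), map_one]
  set A := fT 4 n
  set B := fT 1 n
  set C := fT 2 n
  have hmapU : ∀ m : ℕ, ρ ((fTrunc 1 n) ^ (2 * m) * (fTrunc 2 n) ^ m) = B ^ (2*m) * C ^ m := by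
    intro m
    rw [map_mul, map_pow, map_pow, map_fTrunc, map_fTrunc]
  have h4 := two_mul_two_zero
  obtain ⟨g, hg⟩ := sq_dvd 1 n
  obtain ⟨h, hh⟩ := sq_dvd 2 n
  rw [sub_eq_iff_eq_add] at hg hh
  have hB4 : B ^ 4 = C ^ 2 := by
    have hg' : B ^ 2 - C = 2 * g := by
      rw [show B ^ 2 = fT 1 n ^ 2 from rfl, hg]; simp [show (2:ℕ) * 1 = 2 from rfl]; exact add_sub_cancel_right _ _
    linear_combination (B^2 + C + 2*g) * hg' + (g*C + g*g) * h4
  have hC4 : C ^ 4 = A ^ 2 := by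
    have hh' : C ^ 2 - A = 2 * h := by
      rw [show C ^ 2 = fT 2 n ^ 2 from rfl, hh]; simp [show (2:ℕ) * 2 = 4 from rfl]; exact add_sub_cancel_right _ _
    linear_combination (C^2 + A + 2*h) * hh' + (h*A + h*h) * h4
  have h2 : A ^ 2 = B ^ 4 * C ^ 2 := by
    rw [hB4, ← hC4]; ring
  -- key identity
  have key : A ^ (2*k+1) * (B ^ (2*1) * C ^ 1) = A ^ 1 * (B ^ (2*(2*k+1)) * C ^ (2*k+1)) := by
    have e : A ^ (2*k) = B ^ (4*k) * C ^ (2*k) := by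
      calc A ^ (2*k) = (A^2)^k := by rw [← pow_mul]
        _ = (B^4 * C^2)^k := by rw [h2]
        _ = B^(4*k) * C^(2*k) := by rw [mul_pow, ← pow_mul, ← pow_mul]
    calc A ^ (2*k+1) * (B ^ (2*1) * C ^ 1)
        = A ^ (2*k) * (A * (B^2 * C)) := by ring
      _ = B^(4*k) * C^(2*k) * (A * (B^2 * C)) := by rw [e]
      _ = A ^ 1 * (B ^ (2*(2*k+1)) * C ^ (2*k+1)) := by ring
  rw [map_mul, map_mul, map_pow, map_pow, map_fTrunc]
  simp only [hmapU] at hinv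
  exact cancel _ _ _ _ _ _ (hinv (2*k+1)) (hinv 1) key
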